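/- Let H be a self-adjoint operator on a separable complex Hilbert space, α ∈ (0,1], E > inf σ(|H|), and let ρ(t) = e^{-itH} ρ₀ e^{itH} solve the von Neumann equation with initial state ρ₀ (a positive trace-one operator) satisfying the regularized-trace energy constraint tr(|H|^{2α} ρ₀) ≤ E^{2α}. If at time t the state ρ(t) is at Bures angle θ := arccos(‖√ρ(0) √ρ(t)‖₁) ∈ [0,π/2] from ρ₀, then t ≥ ((1 − cos θ)/g_α)^{1/α} · (1/E). -/

import Mathlib

open scoped ENNReal NNReal
open MeasureTheory

noncomputable section

local notation "⟪" x ", " y "⟫" => @inner ℂ _ _ x y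

/-- `ζ_α := (2α/(1-α))^{1-α} + 2(2α/(1-α))^{-α}` for `α ∈ (0,1)`, and `ζ₁ := 1`. -/
def zetaC (α : ℝ) : ℝ :=
  if α = 1 then 1 else (2 * α / (1 - α)) ^ (1 - α) + 2 * (2 * α / (1 - α)) ^ (-α)

/-- `g_α := ζ_α (1-α)^{(1-α)/2} α^{α/2}`. -/
def gC (α : ℝ) : ℝ := zetaC α * (1 - α) ^ ((1 - α) / 2) * α ^ (α / 2)

variable {ℋ : Type*} [NormedAddCommGroup ℋ] [InnerProductSpace ℂ ℋ]

/-- Trace norm `‖A‖₁ ∈ [0,∞]` via its variational characterization over finite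
orthonormal families. -/
def trNorm (A : ℋ →L[ℂ] ℋ) : ℝ≥0∞ :=
  ⨆ (n : ℕ) (e : Fin n → ℋ) (f : Fin n → ℋ) (_ : Orthonormal ℂ e) (_ : Orthonormal ℂ f),
    ∑ i, ENNReal.ofReal ‖⟪e i, A (f i)⟫‖

/-- Trace of a positive operator. -/
def opTr (A : ℋ →L[ℂ] ℋ) : ℝ≥0∞ :=
  ⨆ (n : ℕ) (e : Fin n → ℋ) (_ : Orthonormal ℂ e),
    ENNReal.ofReal (∑ i, (⟪A (e i), e i⟫).re)

/-- Positivity of a bounded operator. -/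
def IsPosOp (A : ℋ →L[ℂ] ℋ) : Prop :=
  (∀ x y : ℋ, ⟪A x, y⟫ = ⟪x, A y⟫) ∧ ∀ x : ℋ, 0 ≤ (⟪A x, x⟫).re

/-- A state: positive operator of unit trace. -/
def IsStateOp (A : ℋ →L[ℂ] ℋ) : Prop := IsPosOp A ∧ opTr A = 1

/-- The `p`-th absolute spectral moment `∫ |s|^p dμ_x(s)`; for the spectral measure family of
a self-adjoint operator `H` this equals `‖|H|^{p/2} x‖²` (possibly `∞`). -/
def specMoment (μ : ℋ → Measure ℝ) (p : ℝ) (x : ℋ) : ℝ≥0∞ :=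
  ∫⁻ s, ENNReal.ofReal (|s| ^ p) ∂(μ x)

/-- Regularized-trace energy constraint `tr(S^{p2} ρ) ≤ B` via an eigen-decomposition of `ρ`. -/
def stateEnergyLE (μ : ℋ → Measure ℝ) (p2 : ℝ) (ρ : ℋ →L[ℂ] ℋ) (B : ℝ≥0∞) : Prop :=
  ∃ (p : ℕ → ℝ≥0) (φ : ℕ → ℋ), Orthonormal ℂ φ ∧
    (∀ x : ℋ, ρ x = ∑' i, (p i : ℂ) • (⟪φ i, x⟫ • φ i)) ∧
    ∑' i, (p i : ℝ≥0∞) * specMoment μ p2 (φ i) ≤ B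


lemma gC_ge {α : ℝ} (h0 : 0 < α) (h1 : α ≤ 1) : (2:ℝ) ^ ((1:ℝ) - α) ≤ gC α := by
  rcases eq_or_lt_of_le h1 with rfl | h1
  · simp [gC, zetaC, Real.rpow_zero]
  have h1' : (0:ℝ) < 1 - α := by linarith
  have hc : (0:ℝ) < 2 * α / (1 - α) := by positivity
  have hlα : Real.log α ≤ 0 := Real.log_nonpos h0.le h1.le
  have hl1α : Real.log (1 - α) ≤ 0 := Real.log_nonpos h1'.le (by linarith)
  have hlc : Real.log (2 * α / (1 - α)) = Real.log 2 + Real.log α - Real.log (1 - α) := by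
    rw [Real.log_div (by positivity) (by positivity), Real.log_mul two_ne_zero h0.ne']
  have hA : α * 2 ^ ((1:ℝ) - α) ≤ (2 * α / (1 - α)) ^ (1 - α) * ((1 - α) ^ ((1 - α) / 2) * α ^ (α / 2)) := by
    rw [← Real.log_le_log_iff (by positivity) (by positivity)]
    rw [Real.log_mul (by positivity) (by positivity), Real.log_mul (by positivity) (by positivity),
      Real.log_mul (by positivity) (by positivity),
      Real.log_rpow h0, Real.log_rpow hc, Real.log_rpow h1', Real.log_rpow two_pos, hlc]
    nlinarith [mul_nonneg (h0.le) (neg_nonneg.2 hlα), mul_nonneg h1'.le (neg_nonneg.2 hl1α)]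
  have hB : (1 - α) * 2 ^ ((1:ℝ) - α) ≤ 2 * (2 * α / (1 - α)) ^ (-α) * ((1 - α) ^ ((1 - α) / 2) * α ^ (α / 2)) := by
    rw [← Real.log_le_log_iff (by positivity) (by positivity)]
    rw [Real.log_mul (by positivity) (by positivity), Real.log_mul (by positivity) (by positivity),
      Real.log_mul two_ne_zero (by positivity),
      Real.log_mul (by positivity) (by positivity),
      Real.log_rpow hc, Real.log_rpow h1', Real.log_rpow two_pos, Real.log_rpow h0, hlc]
    nlinarith [mul_nonneg (h0.le) (neg_nonneg.2 hlα), mul_nonneg h1'.le (neg_nonneg.2 hl1α)]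
  have hgC : gC α = (2 * α / (1 - α)) ^ (1 - α) * ((1 - α) ^ ((1 - α) / 2) * α ^ (α / 2))
      + 2 * (2 * α / (1 - α)) ^ (-α) * ((1 - α) ^ ((1 - α) / 2) * α ^ (α / 2)) := by
    rw [gC, zetaC, if_neg h1.ne]; ring
  rw [hgC]
  nlinarith [hA, hB]

lemma one_sub_cos_le' {α : ℝ} (h0 : 0 < α) (hα1 : α ≤ 1) (x : ℝ) :
    1 - Real.cos x ≤ 2 ^ ((1:ℝ) - α) * |x| ^ α := by
  set a := |x| with ha
  have ha0 : 0 ≤ a := abs_nonneg x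
  rcases le_or_gt a 2 with hle | hgt
  · have h1 : 1 - Real.cos x ≤ x ^ 2 / 2 := by
      have := Real.one_sub_sq_div_two_le_cos (x := x); linarith
    have hx2 : x ^ 2 = a ^ (2:ℝ) := by
      rw [← sq_abs, ← ha, ← Real.rpow_natCast a 2]; norm_num
    rcases eq_or_lt_of_le ha0 with h0a | h0a
    · have hx0 : x = 0 := abs_eq_zero.mp h0a.symm
      subst hx0; simp [Real.cos_zero]; positivity
    · have key : a ^ (2:ℝ) / 2 ≤ 2 ^ ((1:ℝ) - α) * a ^ α := by
        have hsplit : a ^ (2:ℝ) = a ^ α * a ^ ((2:ℝ) - α) := by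
          rw [← Real.rpow_add h0a]; ring_nf
        rw [hsplit]
        have h2 : a ^ ((2:ℝ) - α) ≤ 2 ^ ((2:ℝ) - α) :=
          Real.rpow_le_rpow ha0 hle (by linarith)
        calc a ^ α * a ^ ((2:ℝ)-α) / 2 ≤ a ^ α * 2 ^ ((2:ℝ)-α) / 2 := by
              have := Real.rpow_nonneg ha0 α; nlinarith
          _ = 2 ^ ((1:ℝ) - α) * a ^ α := by
              rw [show (2:ℝ) - α = 1 + (1 - α) by ring, Real.rpow_add two_pos,
                Real.rpow_one]; ring
      linarith [h1, hx2 ▸ key]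
  · calc 1 - Real.cos x ≤ 2 := by linarith [Real.neg_one_le_cos x]
      _ = 2 ^ ((1:ℝ) - α) * 2 ^ α := by rw [← Real.rpow_add two_pos]; norm_num
      _ ≤ 2 ^ ((1:ℝ) - α) * a ^ α := by
          have h3 : (2:ℝ) ^ α ≤ a ^ α := Real.rpow_le_rpow (by norm_num) hgt.le h0.le
          have h2 : (0:ℝ) < 2 ^ ((1:ℝ) - α) := Real.rpow_pos_of_pos two_pos _
          nlinarith

lemma energy_step {α t : ℝ} (h0 : 0 < α) (hα1 : α ≤ 1) (ht : 0 ≤ t)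
    (μx : Measure ℝ) (hμ1 : μx Set.univ = 1) (z : ℂ)
    (hz : z = ∫ s, Complex.exp (-(Complex.I * t * s)) ∂μx) :
    ENNReal.ofReal (1 - z.re) ≤ ENNReal.ofReal (2 ^ ((1:ℝ) - α) * t ^ α) *
      (∫⁻ s, ENNReal.ofReal (|s| ^ (2 * α)) ∂μx) ^ ((1:ℝ)/2) := by
  haveI : IsProbabilityMeasure μx := ⟨hμ1⟩
  have hcont : Continuous fun s : ℝ => Complex.exp (-(Complex.I * t * s)) := by fun_prop
  have hre : ∀ s : ℝ, (Complex.exp (-(Complex.I * t * s))).re = Real.cos (t * s) := by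
    intro s
    rw [Complex.exp_re]
    have h1 : (-(Complex.I * t * s)).re = 0 := by simp
    have h2 : (-(Complex.I * t * s)).im = -(t * s) := by simp
    rw [h1, h2, Real.exp_zero, Real.cos_neg, one_mul]
  have hint : Integrable (fun s : ℝ => Complex.exp (-(Complex.I * t * s))) μx := by
    refine Integrable.mono' (integrable_const 1) hcont.aestronglyMeasurable ?_
    refine Filter.Eventually.of_forall fun s => ?_
    rw [Complex.norm_exp]
    simp
  have hcosint : Integrable (fun s : ℝ => Real.cos (t * s)) μx := by
    refine Integrable.mono' (integrable_const 1)
      ((Real.continuous_cos.comp (continuous_const.mul continuous_id)).aestronglyMeasurable) ?_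
    exact Filter.Eventually.of_forall fun s => by
      rw [Real.norm_eq_abs]; exact Real.abs_cos_le_one _
  have hzre : z.re = ∫ s, Real.cos (t * s) ∂μx := by
    have h1 : Complex.reCLM (∫ s, Complex.exp (-(Complex.I * t * s)) ∂μx)
        = ∫ s, Complex.reCLM (Complex.exp (-(Complex.I * t * s))) ∂μx :=
      (ContinuousLinearMap.integral_comp_comm Complex.reCLM hint).symm
    rw [hz]
    refine (h1.trans ?_)
    exact integral_congr_ae (Filter.Eventually.of_forall fun s => hre s)
  have hone : ∫ _ : ℝ, (1:ℝ) ∂μx = 1 := by simp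
  have hsubint : Integrable (fun s : ℝ => 1 - Real.cos (t * s)) μx :=
    (integrable_const 1).sub hcosint
  have hsub : 1 - z.re = ∫ s, (1 - Real.cos (t * s)) ∂μx := by
    have h2 : ∫ s, (1 - Real.cos (t * s)) ∂μx
        = (∫ _ : ℝ, (1:ℝ) ∂μx) - ∫ s, Real.cos (t * s) ∂μx :=
      integral_sub (integrable_const 1) hcosint
    rw [h2, hone, hzre]
  rw [hsub]
  have hnn : 0 ≤ᵐ[μx] fun s => 1 - Real.cos (t * s) :=
    Filter.Eventually.of_forall fun s => by
      simp only [Pi.zero_apply]; linarith [Real.cos_le_one (t * s)]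
  rw [ofReal_integral_eq_lintegral_ofReal hsubint hnn]
  have hptwise : ∀ s : ℝ, ENNReal.ofReal (1 - Real.cos (t * s))
      ≤ ENNReal.ofReal (2 ^ ((1:ℝ) - α) * t ^ α) * ENNReal.ofReal (|s| ^ α) := by
    intro s
    rw [← ENNReal.ofReal_mul (by positivity)]
    apply ENNReal.ofReal_le_ofReal
    calc 1 - Real.cos (t * s) ≤ 2 ^ ((1:ℝ) - α) * |t * s| ^ α := one_sub_cos_le' h0 hα1 _
      _ = 2 ^ ((1:ℝ) - α) * t ^ α * |s| ^ α := by
          rw [abs_mul, abs_of_nonneg ht, Real.mul_rpow ht (abs_nonneg s)]; ring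
  calc ∫⁻ s, ENNReal.ofReal (1 - Real.cos (t * s)) ∂μx
      ≤ ∫⁻ s, ENNReal.ofReal (2 ^ ((1:ℝ) - α) * t ^ α) * ENNReal.ofReal (|s| ^ α) ∂μx :=
        lintegral_mono hptwise
    _ = ENNReal.ofReal (2 ^ ((1:ℝ) - α) * t ^ α) * ∫⁻ s, ENNReal.ofReal (|s| ^ α) ∂μx :=
        lintegral_const_mul' _ _ ENNReal.ofReal_ne_top
    _ ≤ ENNReal.ofReal (2 ^ ((1:ℝ) - α) * t ^ α) *
        (∫⁻ s, ENNReal.ofReal (|s| ^ (2 * α)) ∂μx) ^ ((1:ℝ)/2) := by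
        gcongr
        have hconj : Real.HolderConjugate 2 2 := Real.HolderConjugate.two_two
        have hmeas : AEMeasurable (fun s : ℝ => ENNReal.ofReal (|s| ^ α)) μx := by fun_prop
        have hH := ENNReal.lintegral_mul_le_Lp_mul_Lq μx hconj hmeas
          (aemeasurable_const (b := (1:ℝ≥0∞)))
        simp only [Pi.mul_apply, mul_one, ENNReal.one_rpow, lintegral_const,
          measure_univ, ENNReal.one_rpow, one_mul] at hH
        calc ∫⁻ s, ENNReal.ofReal (|s| ^ α) ∂μx
            ≤ (∫⁻ s, ENNReal.ofReal (|s| ^ α) ^ (2:ℝ) ∂μx) ^ ((1:ℝ)/2) := by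
              simpa using hH
          _ = (∫⁻ s, ENNReal.ofReal (|s| ^ (2 * α)) ∂μx) ^ ((1:ℝ)/2) := by
              congr 1
              refine lintegral_congr fun s => ?_
              rw [ENNReal.ofReal_rpow_of_nonneg (by positivity) (by norm_num)]
              congr 1
              rw [← Real.rpow_mul (abs_nonneg s), mul_comm]

lemma tsum_cs (f g : ℕ → ℝ≥0∞) :
    ∑' i, f i * g i ≤ (∑' i, f i ^ (2:ℝ)) ^ ((1:ℝ)/2) * (∑' i, g i ^ (2:ℝ)) ^ ((1:ℝ)/2) := by
  have hconj : Real.HolderConjugate 2 2 := Real.HolderConjugate.two_two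
  have h := ENNReal.lintegral_mul_le_Lp_mul_Lq (Measure.count : Measure ℕ) hconj
    (f := f) (g := g) (measurable_of_countable f).aemeasurable
    (measurable_of_countable g).aemeasurable
  simpa [MeasureTheory.lintegral_count] using h

lemma hasSum_inner_rho [CompleteSpace ℋ] (ρ₀ : ℋ →L[ℂ] ℋ) (p : ℕ → ℝ≥0) (φ : ℕ → ℋ)
    (hφon : Orthonormal ℂ φ)
    (hdec : ∀ x : ℋ, ρ₀ x = ∑' i, (p i : ℂ) • (⟪φ i, x⟫ • φ i))
    (hple : ∀ i, (p i : ℝ) ≤ 1) (x : ℋ) :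
    HasSum (fun j => (p j : ℝ) * ‖⟪φ j, x⟫‖ ^ 2) ((⟪x, ρ₀ x⟫).re) := by
  set c : ℕ → ℂ := fun j => (p j : ℂ) * ⟪φ j, x⟫ with hc
  have hnorm : ∀ j, ‖c j‖ ^ 2 ≤ ‖⟪φ j, x⟫‖ ^ 2 := by
    intro j
    have h1 : ‖c j‖ = (p j : ℝ) * ‖⟪φ j, x⟫‖ := by
      rw [hc]; simp [norm_mul]
    rw [h1]
    have h0 := (p j).coe_nonneg
    have h2 := hple j
    have hn := norm_nonneg ⟪φ j, x⟫
    have hp2 : (p j : ℝ) ^ 2 ≤ 1 := by nlinarith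
    nlinarith [hp2, sq_nonneg ‖⟪φ j, x⟫‖]
  have hsummN : Summable fun j => ‖c j‖ ^ 2 :=
    Summable.of_nonneg_of_le (fun j => by positivity) hnorm
      (hφon.inner_products_summable x)
  have hsumm : Summable fun j => c j • φ j := by
    have := (hφon.orthogonalFamily.summable_iff_norm_sq_summable
      (fun j => c j)).2 (by simpa using hsummN)
    simpa [LinearIsometry.toSpanSingleton_apply] using this
  have hρ : HasSum (fun j => c j • φ j) (ρ₀ x) := by
    have := hsumm.hasSum
    rwa [show ∑' j, c j • φ j = ρ₀ x by
      rw [hdec x]; exact tsum_congr fun j => by rw [hc]; rw [smul_smul]] at this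
  have hinner : HasSum (fun j => c j * ⟪x, φ j⟫) (⟪x, ρ₀ x⟫) := by
    simpa [inner_smul_right] using hρ.mapL (innerSL ℂ x)
  have hre : HasSum (fun j => (c j * ⟪x, φ j⟫).re) ((⟪x, ρ₀ x⟫).re) :=
    hinner.mapL Complex.reCLM
  convert hre using 2 with j
  have h1 : c j * ⟪x, φ j⟫ = ((p j : ℝ) : ℂ) * ((Complex.normSq ⟪φ j, x⟫ : ℝ) : ℂ) := by
    rw [hc, ← inner_conj_symm x (φ j), mul_assoc, Complex.mul_conj]
  rw [h1, ← Complex.ofReal_mul, Complex.ofReal_re, ← Complex.sq_norm]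

lemma opTr_le_tsum [CompleteSpace ℋ] (ρ₀ : ℋ →L[ℂ] ℋ) (p : ℕ → ℝ≥0) (φ : ℕ → ℋ)
    (hφon : Orthonormal ℂ φ)
    (hdec : ∀ x : ℋ, ρ₀ x = ∑' i, (p i : ℂ) • (⟪φ i, x⟫ • φ i))
    (hple : ∀ i, (p i : ℝ) ≤ 1) :
    opTr ρ₀ ≤ ∑' i, (p i : ℝ≥0∞) := by
  refine iSup_le fun n => iSup_le fun e => iSup_le fun he => ?_
  have key : ∀ i : Fin n, (⟪ρ₀ (e i), e i⟫).re = ∑' j, (p j : ℝ) * ‖⟪φ j, e i⟫‖ ^ 2 := by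
    intro i
    have h := (hasSum_inner_rho ρ₀ p φ hφon hdec hple (e i)).tsum_eq
    rw [← inner_conj_symm (ρ₀ (e i)) (e i), Complex.conj_re]
    exact h.symm
  have hsummable : ∀ i : Fin n, Summable fun j => (p j : ℝ) * ‖⟪φ j, e i⟫‖ ^ 2 :=
    fun i => (hasSum_inner_rho ρ₀ p φ hφon hdec hple (e i)).summable
  have hswap : ∑ i : Fin n, (⟪ρ₀ (e i), e i⟫).re
      = ∑' j, ∑ i : Fin n, (p j : ℝ) * ‖⟪φ j, e i⟫‖ ^ 2 := by
    rw [Finset.sum_congr rfl fun i _ => key i]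
    exact (Summable.tsum_finsetSum fun i _ => hsummable i).symm
  have hsumm2 : Summable fun j => ∑ i : Fin n, (p j : ℝ) * ‖⟪φ j, e i⟫‖ ^ 2 :=
    (hasSum_sum (s := Finset.univ) fun i _ => (hsummable i).hasSum).summable
  rw [hswap, ENNReal.ofReal_tsum_of_nonneg (fun j => by positivity) hsumm2]
  refine ENNReal.tsum_le_tsum fun j => ?_
  have hb : ∑ i : Fin n, ‖⟪φ j, e i⟫‖ ^ 2 ≤ 1 := by
    have := he.sum_inner_products_le (φ j) (s := Finset.univ)
    rw [hφon.1 j] at this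
    simpa [norm_inner_symm] using this
  have : ∑ i : Fin n, (p j : ℝ) * ‖⟪φ j, e i⟫‖ ^ 2 ≤ (p j : ℝ) := by
    rw [← Finset.mul_sum]
    nlinarith [(p j).coe_nonneg, hb, Finset.sum_nonneg (s := (Finset.univ : Finset (Fin n)))
      (f := fun i => ‖⟪φ j, e i⟫‖ ^ 2) (fun i _ => by positivity)]
  calc ENNReal.ofReal (∑ i : Fin n, (p j : ℝ) * ‖⟪φ j, e i⟫‖ ^ 2)
      ≤ ENNReal.ofReal (p j : ℝ) := ENNReal.ofReal_le_ofReal this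
    _ = (p j : ℝ≥0∞) := ENNReal.ofReal_coe_nnreal

lemma fid_lb [CompleteSpace ℋ] (ρ₀ R : ℋ →L[ℂ] ℋ)
    (hρsa : ∀ x y : ℋ, ⟪ρ₀ x, y⟫ = ⟪x, ρ₀ y⟫)
    (hRsa : ∀ x y : ℋ, ⟪R x, y⟫ = ⟪x, R y⟫)
    (hRR : ∀ x : ℋ, R (R x) = ρ₀ x)
    (p : ℕ → ℝ≥0) (φ : ℕ → ℋ) (hφon : Orthonormal ℂ φ)
    (heig : ∀ i, ρ₀ (φ i) = ((p i : ℝ) : ℂ) • φ i)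
    (T : ℝ → ℋ →L[ℂ] ℋ) (t : ℝ)
    (hTiso : ∀ (u : ℝ) (x : ℋ), ‖T u x‖ = ‖x‖)
    (hTinv : ∀ x : ℋ, T (-t) (T t x) = x)
    (s : Finset ℕ) (hs : ∀ i ∈ s, p i ≠ 0) :
    ENNReal.ofReal (∑ i ∈ s, (p i : ℝ) * ‖⟪φ i, T t (φ i)⟫‖)
      ≤ trNorm (R.comp ((T t).comp (R.comp (T (-t))))) := by
  classical
  set n := s.card with hn
  set σ : Fin n → ℕ := fun j => (s.orderIsoOfFin rfl j : ℕ) with hσ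
  have hσmem : ∀ j, σ j ∈ s := fun j => (s.orderIsoOfFin rfl j).2
  have hσinj : Function.Injective σ := fun a b hab => by
    apply (s.orderIsoOfFin rfl).injective; exact Subtype.ext hab
  have hinner_phi_rho : ∀ (i : ℕ) (y : ℋ), ⟪φ i, ρ₀ y⟫ = ((p i : ℝ) : ℂ) * ⟪φ i, y⟫ := by
    intro i y
    rw [← hρsa, heig, inner_smul_left, Complex.conj_ofReal]
  have hRR' : ∀ x y : ℋ, ⟪R x, R y⟫ = ⟪x, ρ₀ y⟫ := by
    intro x y; rw [hRsa, hRR]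
  set c : Fin n → ℂ := fun j => ((Real.sqrt (p (σ j)) : ℝ) : ℂ)⁻¹ with hc
  set e : Fin n → ℋ := fun j => c j • R (φ (σ j)) with he
  have hppos : ∀ j : Fin n, (0 : ℝ) < (p (σ j) : ℝ) := fun j => by
    have h := hs _ (hσmem j)
    exact_mod_cast pos_iff_ne_zero.2 h
  have hsq : ∀ j : Fin n, (Real.sqrt (p (σ j)) : ℝ) ≠ 0 :=
    fun j => ne_of_gt (Real.sqrt_pos.2 (hppos j))
  have hee : ∀ i j : Fin n, ⟪e i, e j⟫ = if i = j then 1 else 0 := by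
    intro i j
    rw [he]
    simp only [inner_smul_left, inner_smul_right, hRR' , hinner_phi_rho]
    rw [orthonormal_iff_ite.mp hφon]
    by_cases hij : i = j
    · subst hij
      rw [if_pos rfl, if_pos rfl, hc]
      have : ((Real.sqrt (p (σ i)) : ℝ) : ℂ) * (Real.sqrt (p (σ i)) : ℝ) = ((p (σ i) : ℝ) : ℂ) := by
        rw [← Complex.ofReal_mul, Real.mul_self_sqrt (hppos i).le]
      have hnz : ((Real.sqrt (p (σ i)) : ℝ) : ℂ) ≠ 0 := by simpa using hsq i
      simp only [map_inv₀, Complex.conj_ofReal]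
      rw [← this]
      field_simp
    · rw [if_neg (fun h => hij (hσinj h)), if_neg hij]
      simp
  have heon : Orthonormal ℂ e := orthonormal_iff_ite.mpr hee
  set f : Fin n → ℋ := fun j => T t (e j) with hf
  have hfon : Orthonormal ℂ f := by
    refine orthonormal_iff_ite.mpr fun i j => ?_
    have hiso : ∀ x y : ℋ, ⟪T t x, T t y⟫ = ⟪x, y⟫ := by
      intro x y
      exact LinearIsometry.inner_map_map ⟨(T t).toLinearMap, hTiso t⟩ x y
    rw [hf]; simp only [hiso]; exact hee i j
  have hval : ∀ j : Fin n, ⟪e j, (R.comp ((T t).comp (R.comp (T (-t))))) (f j)⟫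
      = ((p (σ j) : ℝ) : ℂ) * ⟪φ (σ j), T t (φ (σ j))⟫ := by
    intro j
    have h1 : (R.comp ((T t).comp (R.comp (T (-t))))) (f j) = R (T t (R (e j))) := by
      simp only [ContinuousLinearMap.comp_apply, hf, hTinv]
    rw [h1]
    have h2 : R (e j) = (c j * ((p (σ j) : ℝ) : ℂ)) • φ (σ j) := by
      rw [he]
      rw [ContinuousLinearMap.map_smul, hRR, heig, smul_smul]
    rw [h2, ContinuousLinearMap.map_smul, ContinuousLinearMap.map_smul, he]
    rw [inner_smul_left, inner_smul_right, hRR', hinner_phi_rho]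
    rw [hc, Complex.conj_inv, Complex.conj_ofReal]
    have hs2 : ((Real.sqrt (p (σ j)) : ℝ) : ℂ) * (Real.sqrt (p (σ j)) : ℝ) = ((p (σ j) : ℝ) : ℂ) := by
      rw [← Complex.ofReal_mul, Real.mul_self_sqrt (hppos j).le]
    have hnz : ((Real.sqrt (p (σ j)) : ℝ) : ℂ) ≠ 0 := by
      simpa using hsq j
    field_simp
    rw [← hs2]
    ring
  have hsum : ∑ i ∈ s, (p i : ℝ) * ‖⟪φ i, T t (φ i)⟫‖
      = ∑ j : Fin n, ‖⟪e j, (R.comp ((T t).comp (R.comp (T (-t))))) (f j)⟫‖ := by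
    rw [Finset.sum_congr rfl (g := fun i => (p i : ℝ) * ‖⟪φ i, T t (φ i)⟫‖) (fun _ _ => rfl)]
    rw [show ∑ j : Fin n, ‖⟪e j, (R.comp ((T t).comp (R.comp (T (-t))))) (f j)⟫‖
        = ∑ j : Fin n, (p (σ j) : ℝ) * ‖⟪φ (σ j), T t (φ (σ j))⟫‖ from
      Finset.sum_congr rfl fun j _ => by
        rw [hval j, norm_mul, Complex.norm_real, Real.norm_eq_abs, abs_of_nonneg (p _).coe_nonneg]]
    exact (Finset.sum_bij (fun j _ => σ j) (fun j _ => hσmem j)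
      (fun a _ b _ h => hσinj h)
      (fun i hi => ⟨(s.orderIsoOfFin rfl).symm ⟨i, hi⟩, Finset.mem_univ _,
        congrArg Subtype.val ((s.orderIsoOfFin rfl).apply_symm_apply ⟨i, hi⟩)⟩)
      (fun j _ => rfl)).symm
  calc ENNReal.ofReal (∑ i ∈ s, (p i : ℝ) * ‖⟪φ i, T t (φ i)⟫‖)
      = ∑ j : Fin n, ENNReal.ofReal ‖⟪e j, (R.comp ((T t).comp (R.comp (T (-t))))) (f j)⟫‖ := by
        rw [hsum, ENNReal.ofReal_sum_of_nonneg (fun j _ => norm_nonneg _)]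
    _ ≤ trNorm (R.comp ((T t).comp (R.comp (T (-t))))) := by
        refine le_trans (le_of_eq rfl) ?_
        exact le_iSup_of_le n (le_iSup_of_le e (le_iSup_of_le f (le_iSup_of_le heon
          (le_iSup_of_le hfon le_rfl))))

lemma trNorm_le_one_aux (ρ₀ R : ℋ →L[ℂ] ℋ)
    (hRsa : ∀ x y : ℋ, ⟪R x, y⟫ = ⟪x, R y⟫)
    (hRR : ∀ x : ℋ, R (R x) = ρ₀ x)
    (htr : opTr ρ₀ = 1)
    (T : ℝ → ℋ →L[ℂ] ℋ) (t : ℝ)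
    (hTiso : ∀ (u : ℝ) (x : ℋ), ‖T u x‖ = ‖x‖) :
    trNorm (R.comp ((T t).comp (R.comp (T (-t))))) ≤ 1 := by
  have hRnorm : ∀ (n : ℕ) (e : Fin n → ℋ), Orthonormal ℂ e →
      ∑ i : Fin n, ‖R (e i)‖ ^ 2 ≤ 1 := by
    intro n e he
    have key : ∀ i : Fin n, ‖R (e i)‖ ^ 2 = (⟪ρ₀ (e i), e i⟫).re := by
      intro i
      have h : ⟪ρ₀ (e i), e i⟫ = ⟪R (e i), R (e i)⟫ := by rw [← hRR, hRsa]
      rw [h]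
      simpa [RCLike.re_to_complex] using (inner_self_eq_norm_sq (𝕜 := ℂ) (R (e i))).symm
    have h1 : ENNReal.ofReal (∑ i : Fin n, (⟪ρ₀ (e i), e i⟫).re) ≤ 1 := by
      rw [← htr]
      exact le_iSup_of_le n (le_iSup_of_le e (le_iSup_of_le he le_rfl))
    have h2 : ∑ i : Fin n, (⟪ρ₀ (e i), e i⟫).re ≤ 1 := by
      rw [← ENNReal.ofReal_one] at h1
      exact (ENNReal.ofReal_le_ofReal_iff (by norm_num)).mp h1
    calc ∑ i : Fin n, ‖R (e i)‖ ^ 2 = ∑ i : Fin n, (⟪ρ₀ (e i), e i⟫).re :=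
          Finset.sum_congr rfl fun i _ => key i
      _ ≤ 1 := h2
  refine iSup_le fun n => iSup_le fun e => iSup_le fun f => iSup_le fun he => iSup_le fun hf => ?_
  set f' : Fin n → ℋ := fun i => T (-t) (f i) with hf'
  have hf'on : Orthonormal ℂ f' := by
    refine orthonormal_iff_ite.mpr fun i j => ?_
    have hiso : ∀ x y : ℋ, ⟪T (-t) x, T (-t) y⟫ = ⟪x, y⟫ := fun x y =>
      LinearIsometry.inner_map_map ⟨(T (-t)).toLinearMap, hTiso (-t)⟩ x y
    rw [hf']; simp only [hiso]
    exact orthonormal_iff_ite.mp hf i j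
  have hterm : ∀ i : Fin n, ‖⟪e i, (R.comp ((T t).comp (R.comp (T (-t))))) (f i)⟫‖
      ≤ (‖R (e i)‖ ^ 2 + ‖R (f' i)‖ ^ 2) / 2 := by
    intro i
    have h1 : (R.comp ((T t).comp (R.comp (T (-t))))) (f i) = R (T t (R (f' i))) := rfl
    rw [h1]
    have h2 : ⟪e i, R (T t (R (f' i)))⟫ = ⟪R (e i), T t (R (f' i))⟫ := (hRsa (e i) _).symm
    rw [h2]
    calc ‖⟪R (e i), T t (R (f' i))⟫‖ ≤ ‖R (e i)‖ * ‖T t (R (f' i))‖ := norm_inner_le_norm _ _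
      _ = ‖R (e i)‖ * ‖R (f' i)‖ := by rw [hTiso]
      _ ≤ (‖R (e i)‖ ^ 2 + ‖R (f' i)‖ ^ 2) / 2 := by nlinarith [sq_nonneg (‖R (e i)‖ - ‖R (f' i)‖)]
  calc ∑ i : Fin n, ENNReal.ofReal ‖⟪e i, (R.comp ((T t).comp (R.comp (T (-t))))) (f i)⟫‖
      ≤ ∑ i : Fin n, ENNReal.ofReal ((‖R (e i)‖ ^ 2 + ‖R (f' i)‖ ^ 2) / 2) :=
        Finset.sum_le_sum fun i _ => ENNReal.ofReal_le_ofReal (hterm i)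
    _ = ENNReal.ofReal (∑ i : Fin n, (‖R (e i)‖ ^ 2 + ‖R (f' i)‖ ^ 2) / 2) :=
        (ENNReal.ofReal_sum_of_nonneg fun i _ => by positivity).symm
    _ ≤ 1 := by
        rw [← ENNReal.ofReal_one]
        apply ENNReal.ofReal_le_ofReal
        have hA := hRnorm n e he
        have hB := hRnorm n f' hf'on
        rw [← Finset.sum_div, Finset.sum_add_distrib]
        linarith



lemma finsum_p_le (ρ₀ : ℋ →L[ℂ] ℋ) (p : ℕ → ℝ≥0) (φ : ℕ → ℋ)
    (hφon : Orthonormal ℂ φ)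
    (heig : ∀ i, ρ₀ (φ i) = ((p i : ℝ) : ℂ) • φ i) (s : Finset ℕ) :
    ENNReal.ofReal (∑ i ∈ s, (p i : ℝ)) ≤ opTr ρ₀ := by
  classical
  set n := s.card with hn
  set σ : Fin n → ℕ := fun j => (s.orderIsoOfFin rfl j : ℕ) with hσ
  have hσmem : ∀ j, σ j ∈ s := fun j => (s.orderIsoOfFin rfl j).2
  have hσinj : Function.Injective σ := fun a b hab => by
    apply (s.orderIsoOfFin rfl).injective; exact Subtype.ext hab
  set e : Fin n → ℋ := fun j => φ (σ j) with he
  have heon : Orthonormal ℂ e := hφon.comp σ hσinj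
  have hval : ∀ j : Fin n, (⟪ρ₀ (e j), e j⟫).re = (p (σ j) : ℝ) := by
    intro j
    rw [he]
    simp only [heig, inner_smul_left, Complex.conj_ofReal]
    rw [orthonormal_iff_ite.mp hφon, if_pos rfl]
    simp
  have hsum : ∑ i ∈ s, (p i : ℝ) = ∑ j : Fin n, (⟪ρ₀ (e j), e j⟫).re := by
    rw [Finset.sum_congr rfl (fun j (_ : j ∈ (Finset.univ : Finset (Fin n))) => hval j)]
    exact (Finset.sum_bij (fun j _ => σ j) (fun j _ => hσmem j)
      (fun a _ b _ h => hσinj h)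
      (fun i hi => ⟨(s.orderIsoOfFin rfl).symm ⟨i, hi⟩, Finset.mem_univ _,
        congrArg Subtype.val ((s.orderIsoOfFin rfl).apply_symm_apply ⟨i, hi⟩)⟩)
      (fun j _ => rfl)).symm
  rw [hsum]
  exact le_iSup_of_le n (le_iSup_of_le e (le_iSup_of_le heon le_rfl))

/-- Quantum speed limit, closed systems, mixed states.  `H` self-adjoint
(encoded by its unitary group `T` and spectral measure family `μ`), `α ∈ (0,1]`,
`E > inf σ(|H|)`, `ρ(t) = e^{-itH} ρ₀ e^{itH}`; `ρ₀` a state with regularized-trace energy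
constraint `tr(|H|^{2α}ρ₀) ≤ E^{2α}`, `R = √ρ₀` (so that `√ρ(t) = T_t R T_{-t}`), and Bures
angle `θ = arccos ‖√ρ(0) √ρ(t)‖₁ ∈ [0,π/2]`.  Then `t ≥ ((1 − cos θ)/g_α)^{1/α}·(1/E)`. -/
theorem statement7
    {ℋ : Type*} [NormedAddCommGroup ℋ] [InnerProductSpace ℂ ℋ] [CompleteSpace ℋ]
    [TopologicalSpace.SeparableSpace ℋ]
    (H : ℋ →ₗ.[ℂ] ℋ) (hHsa : IsSelfAdjoint H)
    (μ : ℋ → Measure ℝ)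
    (hμtot : ∀ x : ℋ, μ x Set.univ = ENNReal.ofReal (‖x‖ ^ 2))
    (hHdom : ∀ x : ℋ, x ∈ H.domain ↔ specMoment μ 2 x ≠ ∞)
    (hHval : ∀ x : H.domain, ⟪(x : ℋ), H x⟫ = ∫ s, (s : ℂ) ∂(μ x))
    (T : ℝ → ℋ →L[ℂ] ℋ)
    (hT0 : T 0 = ContinuousLinearMap.id ℂ ℋ)
    (hTadd : ∀ t s : ℝ, (T t).comp (T s) = T (t + s))
    (hTiso : ∀ (t : ℝ) (x : ℋ), ‖T t x‖ = ‖x‖)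
    (hμT : ∀ (x : ℋ) (t : ℝ), ⟪x, T t x⟫ = ∫ s, Complex.exp (-(Complex.I * t * s)) ∂(μ x))
    (α : ℝ) (hα : α ∈ Set.Ioc (0 : ℝ) 1)
    (En : ℝ) (hEn : ∃ x : ℋ, x ≠ 0 ∧ μ x {s : ℝ | |s| < En} ≠ 0)
    (ρ₀ : ℋ →L[ℂ] ℋ) (hρ₀ : IsStateOp ρ₀)
    (hρ₀E : stateEnergyLE μ (2 * α) ρ₀ (ENNReal.ofReal (En ^ (2 * α))))
    -- R = √ρ₀, the positive square root of the initial state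
    (R : ℋ →L[ℂ] ℋ) (hRpos : IsPosOp R) (hRsq : R.comp R = ρ₀)
    (t : ℝ) (ht : 0 ≤ t)
    -- θ = Bures angle between ρ(0) and ρ(t) = T_t ρ₀ T_{-t}, whose square root is T_t R T_{-t}
    (θ : ℝ)
    (hθ : θ = Real.arccos
      ((trNorm (R.comp ((T t).comp (R.comp (T (-t)))))).toReal)) :
    t ≥ ((1 - Real.cos θ) / gC α) ^ (1 / α) * (1 / En) := by
  obtain ⟨hα0, hα1⟩ := hα
  have hEn0 : 0 < En := by
    obtain ⟨x, hx0, hμx⟩ := hEn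
    by_contra hc
    push_neg at hc
    apply hμx
    have hset : {s : ℝ | |s| < En} = ∅ := by
      apply Set.eq_empty_of_forall_notMem
      intro s hs
      have h1 : |s| < En := hs
      linarith [abs_nonneg s]
    rw [hset]
    simp
  obtain ⟨p, φ, hφon, hdec, hpE⟩ := hρ₀E
  have hρsa := hρ₀.1.1
  have htr := hρ₀.2
  have hRsa := hRpos.1
  have hRR : ∀ x : ℋ, R (R x) = ρ₀ x := fun x => by rw [← hRsq]; rfl
  have heig : ∀ i, ρ₀ (φ i) = ((p i : ℝ) : ℂ) • φ i := by
    intro i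
    rw [hdec (φ i)]
    rw [tsum_eq_single i ?_]
    · rw [orthonormal_iff_ite.mp hφon, if_pos rfl]
      simp
    · intro j hj
      rw [orthonormal_iff_ite.mp hφon, if_neg hj]
      simp
  have hple : ∀ i, (p i : ℝ) ≤ 1 := by
    intro i
    have h := finsum_p_le ρ₀ p φ hφon heig {i}
    rw [htr, Finset.sum_singleton] at h
    exact ENNReal.ofReal_le_one.mp h
  have htsum_ge : (1 : ℝ≥0∞) ≤ ∑' i, (p i : ℝ≥0∞) := by
    rw [← htr]
    exact opTr_le_tsum ρ₀ p φ hφon hdec hple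
  have htsum_le : ∑' i, (p i : ℝ≥0∞) ≤ 1 := by
    rw [ENNReal.tsum_eq_iSup_sum]
    refine iSup_le fun s => ?_
    have h1 : ∑ i ∈ s, ((p i : ℝ≥0) : ℝ≥0∞) = ENNReal.ofReal (∑ i ∈ s, (p i : ℝ)) := by
      rw [ENNReal.ofReal_sum_of_nonneg (fun i _ => (p i).coe_nonneg)]
      exact Finset.sum_congr rfl fun i _ => ENNReal.ofReal_coe_nnreal.symm
    rw [h1, ← htr]
    exact finsum_p_le ρ₀ p φ hφon heig s
  have hTinv : ∀ x : ℋ, T (-t) (T t x) = x := by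
    intro x
    have h := hTadd (-t) t
    rw [neg_add_cancel, hT0] at h
    calc T (-t) (T t x) = ((T (-t)).comp (T t)) x := rfl
      _ = x := by rw [h]; rfl
  have htnle : trNorm (R.comp ((T t).comp (R.comp (T (-t))))) ≤ 1 :=
    trNorm_le_one_aux ρ₀ R hRsa hRR htr T t hTiso
  have htne : trNorm (R.comp ((T t).comp (R.comp (T (-t))))) ≠ ⊤ :=
    (lt_of_le_of_lt htnle (by norm_num)).ne
  set F := (trNorm (R.comp ((T t).comp (R.comp (T (-t)))))).toReal with hFdef
  have hF0 : 0 ≤ F := ENNReal.toReal_nonneg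
  have hF1 : F ≤ 1 := by
    have h := ENNReal.toReal_mono (by norm_num : (1:ℝ≥0∞) ≠ ⊤) htnle
    simpa using h
  have hμ1 : ∀ i, μ (φ i) Set.univ = 1 := by
    intro i
    rw [hμtot, hφon.1 i]
    norm_num
  have hg2 : (2:ℝ) ^ ((1:ℝ) - α) ≤ gC α := gC_ge hα0 hα1
  have hgpos : 0 < gC α := lt_of_lt_of_le (Real.rpow_pos_of_pos two_pos _) hg2
  set N : ℕ → ℝ≥0∞ := fun i => specMoment μ (2 * α) (φ i) with hN
  have hper : ∀ i, ENNReal.ofReal (1 - (⟪φ i, T t (φ i)⟫).re)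
      ≤ ENNReal.ofReal ((2:ℝ) ^ ((1:ℝ) - α) * t ^ α) * N i ^ ((1:ℝ)/2) := by
    intro i
    have h := energy_step hα0 hα1 ht (μ (φ i)) (hμ1 i) _ (hμT (φ i) t)
    simpa [hN, specMoment] using h
  -- Cauchy-Schwarz on the series
  have hCS : ∑' i, (p i : ℝ≥0∞) * N i ^ ((1:ℝ)/2)
      ≤ (∑' i, (p i : ℝ≥0∞)) ^ ((1:ℝ)/2) * (∑' i, (p i : ℝ≥0∞) * N i) ^ ((1:ℝ)/2) := by
    have h := tsum_cs (fun i => ((p i : ℝ≥0∞)) ^ ((1:ℝ)/2))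
      (fun i => ((p i : ℝ≥0∞)) ^ ((1:ℝ)/2) * N i ^ ((1:ℝ)/2))
    have hhalf : ∀ x : ℝ≥0∞, (x ^ ((1:ℝ)/2)) ^ (2:ℝ) = x := by
      intro x
      rw [← ENNReal.rpow_mul]
      norm_num
    have e1 : ∀ i, ((p i : ℝ≥0∞)) ^ ((1:ℝ)/2) * (((p i : ℝ≥0∞)) ^ ((1:ℝ)/2) * N i ^ ((1:ℝ)/2))
        = (p i : ℝ≥0∞) * N i ^ ((1:ℝ)/2) := by
      intro i
      rw [← mul_assoc, ← ENNReal.rpow_add_of_nonneg _ _ (by norm_num) (by norm_num)]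
      norm_num
    have e2 : ∀ i, (((p i : ℝ≥0∞)) ^ ((1:ℝ)/2) * N i ^ ((1:ℝ)/2)) ^ (2:ℝ)
        = (p i : ℝ≥0∞) * N i := by
      intro i
      rw [ENNReal.mul_rpow_of_nonneg _ _ (by norm_num : (0:ℝ) ≤ 2), hhalf, hhalf]
    calc ∑' i, (p i : ℝ≥0∞) * N i ^ ((1:ℝ)/2)
        = ∑' i, ((p i : ℝ≥0∞)) ^ ((1:ℝ)/2) * (((p i : ℝ≥0∞)) ^ ((1:ℝ)/2) * N i ^ ((1:ℝ)/2)) :=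
          tsum_congr fun i => (e1 i).symm
      _ ≤ (∑' i, (((p i : ℝ≥0∞)) ^ ((1:ℝ)/2)) ^ (2:ℝ)) ^ ((1:ℝ)/2) *
          (∑' i, (((p i : ℝ≥0∞)) ^ ((1:ℝ)/2) * N i ^ ((1:ℝ)/2)) ^ (2:ℝ)) ^ ((1:ℝ)/2) := h
      _ = (∑' i, (p i : ℝ≥0∞)) ^ ((1:ℝ)/2) * (∑' i, (p i : ℝ≥0∞) * N i) ^ ((1:ℝ)/2) := by
            rw [tsum_congr fun i => hhalf ((p i : ℝ≥0∞)), tsum_congr fun i => e2 i]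
  -- bound on the dispersion series
  set K : ℝ := gC α * (t ^ α * En ^ α) with hK
  have hK0 : 0 ≤ K := by
    have h1 : (0:ℝ) ≤ t ^ α := Real.rpow_nonneg ht α
    have h2 : (0:ℝ) ≤ En ^ α := Real.rpow_nonneg hEn0.le α
    positivity
  have hD : ∑' i, (p i : ℝ≥0∞) * ENNReal.ofReal (1 - (⟪φ i, T t (φ i)⟫).re)
      ≤ ENNReal.ofReal K := by
    calc ∑' i, (p i : ℝ≥0∞) * ENNReal.ofReal (1 - (⟪φ i, T t (φ i)⟫).re)
        ≤ ∑' i, (p i : ℝ≥0∞) * (ENNReal.ofReal ((2:ℝ) ^ ((1:ℝ) - α) * t ^ α) * N i ^ ((1:ℝ)/2)) :=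
          ENNReal.tsum_le_tsum fun i => mul_le_mul_right (hper i) _
      _ = ENNReal.ofReal ((2:ℝ) ^ ((1:ℝ) - α) * t ^ α) * ∑' i, (p i : ℝ≥0∞) * N i ^ ((1:ℝ)/2) := by
          rw [← ENNReal.tsum_mul_left]
          exact tsum_congr fun i => by ring
      _ ≤ ENNReal.ofReal ((2:ℝ) ^ ((1:ℝ) - α) * t ^ α) *
          ((∑' i, (p i : ℝ≥0∞)) ^ ((1:ℝ)/2) * (∑' i, (p i : ℝ≥0∞) * N i) ^ ((1:ℝ)/2)) :=
          mul_le_mul_right hCS _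
      _ ≤ ENNReal.ofReal ((2:ℝ) ^ ((1:ℝ) - α) * t ^ α) *
          (1 * (ENNReal.ofReal (En ^ (2 * α))) ^ ((1:ℝ)/2)) := by
          refine mul_le_mul_right (mul_le_mul' ?_ ?_) _
          · calc (∑' i, (p i : ℝ≥0∞)) ^ ((1:ℝ)/2) ≤ (1:ℝ≥0∞) ^ ((1:ℝ)/2) :=
                ENNReal.rpow_le_rpow htsum_le (by norm_num)
              _ = 1 := ENNReal.one_rpow _
          · exact ENNReal.rpow_le_rpow hpE (by norm_num)
      _ ≤ ENNReal.ofReal K := by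
          rw [one_mul, ENNReal.ofReal_rpow_of_nonneg (Real.rpow_nonneg hEn0.le _) (by norm_num)]
          rw [← ENNReal.ofReal_mul (by positivity)]
          apply ENNReal.ofReal_le_ofReal
          have hEn2 : (En ^ (2 * α)) ^ ((1:ℝ)/2) = En ^ α := by
            rw [← Real.rpow_mul hEn0.le]
            congr 1
            ring
          rw [hEn2, hK]
          have h1 : (0:ℝ) ≤ t ^ α := Real.rpow_nonneg ht α
          have h2 : (0:ℝ) ≤ En ^ α := Real.rpow_nonneg hEn0.le α
          nlinarith [hg2]
  -- the fidelity lower bound, per finite set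
  have hRe_le : ∀ i, ‖⟪φ i, T t (φ i)⟫‖ ≤ 1 := by
    intro i
    calc ‖⟪φ i, T t (φ i)⟫‖ ≤ ‖φ i‖ * ‖T t (φ i)‖ := norm_inner_le_norm _ _
      _ = 1 := by rw [hTiso, hφon.1 i]; norm_num
  have hmain : (1 : ℝ≥0∞) ≤ ENNReal.ofReal F + ENNReal.ofReal K := by
    refine le_trans htsum_ge ?_
    rw [ENNReal.tsum_eq_iSup_sum]
    refine iSup_le fun s => ?_
    classical
    set s' := s.filter (fun i => p i ≠ 0) with hs'
    have hfilter : ∑ i ∈ s', (p i : ℝ) = ∑ i ∈ s, (p i : ℝ) := by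
      rw [hs']
      refine Finset.sum_filter_of_ne fun i _ hne => ?_
      exact fun h0 => hne (by rw [h0]; simp)
    have hfid : ∑ i ∈ s', (p i : ℝ) * ‖⟪φ i, T t (φ i)⟫‖ ≤ F := by
      have h := fid_lb ρ₀ R hρsa hRsa hRR p φ hφon heig T t hTiso hTinv s'
        (fun i hi => (Finset.mem_filter.mp hi).2)
      have h2 := ENNReal.toReal_mono htne h
      rwa [ENNReal.toReal_ofReal (Finset.sum_nonneg fun i _ =>
        mul_nonneg (p i).coe_nonneg (norm_nonneg _))] at h2
    have hdisp : ∑ i ∈ s', (p i : ℝ) * (1 - (⟪φ i, T t (φ i)⟫).re) ≤ K := by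
      have h1 : ENNReal.ofReal (∑ i ∈ s', (p i : ℝ) * (1 - (⟪φ i, T t (φ i)⟫).re))
          ≤ ∑' i, (p i : ℝ≥0∞) * ENNReal.ofReal (1 - (⟪φ i, T t (φ i)⟫).re) := by
        rw [ENNReal.ofReal_sum_of_nonneg (fun i _ => mul_nonneg (p i).coe_nonneg
          (by linarith [Complex.re_le_norm ⟪φ i, T t (φ i)⟫,
            hRe_le i]))]
        refine le_trans (Finset.sum_le_sum fun i _ => le_of_eq ?_) (ENNReal.summable.sum_le_tsum s' (fun _ _ => zero_le))
        rw [ENNReal.ofReal_mul (p i).coe_nonneg, ENNReal.ofReal_coe_nnreal]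
      have h2 := le_trans h1 hD
      exact (ENNReal.ofReal_le_ofReal_iff hK0).mp h2
    have hreal : ∑ i ∈ s, (p i : ℝ) ≤ F + K := by
      have hterm : ∀ i ∈ s', (p i : ℝ) ≤ (p i : ℝ) * ‖⟪φ i, T t (φ i)⟫‖
          + (p i : ℝ) * (1 - (⟪φ i, T t (φ i)⟫).re) := by
        intro i _
        have hre := Complex.re_le_norm ⟪φ i, T t (φ i)⟫
        have hnorm : ‖⟪φ i, T t (φ i)⟫‖ = ‖⟪φ i, T t (φ i)⟫‖ :=
          rfl
        have hp0 := (p i).coe_nonneg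
        nlinarith [hre, hnorm ▸ hre]
      calc ∑ i ∈ s, (p i : ℝ) = ∑ i ∈ s', (p i : ℝ) := hfilter.symm
        _ ≤ ∑ i ∈ s', ((p i : ℝ) * ‖⟪φ i, T t (φ i)⟫‖
            + (p i : ℝ) * (1 - (⟪φ i, T t (φ i)⟫).re)) := Finset.sum_le_sum hterm
        _ = (∑ i ∈ s', (p i : ℝ) * ‖⟪φ i, T t (φ i)⟫‖)
            + ∑ i ∈ s', (p i : ℝ) * (1 - (⟪φ i, T t (φ i)⟫).re) := Finset.sum_add_distrib
        _ ≤ F + K := add_le_add hfid hdisp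
    calc ∑ i ∈ s, ((p i : ℝ≥0) : ℝ≥0∞) = ENNReal.ofReal (∑ i ∈ s, (p i : ℝ)) := by
          rw [ENNReal.ofReal_sum_of_nonneg (fun i _ => (p i).coe_nonneg)]
          exact Finset.sum_congr rfl fun i _ => ENNReal.ofReal_coe_nnreal.symm
      _ ≤ ENNReal.ofReal (F + K) := ENNReal.ofReal_le_ofReal hreal
      _ ≤ ENNReal.ofReal F + ENNReal.ofReal K := ENNReal.ofReal_add_le
  have hFK : 1 ≤ F + K := by
    rw [← ENNReal.ofReal_add hF0 hK0] at hmain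
    exact (ENNReal.one_le_ofReal).mp hmain
  have hcos : Real.cos θ = F := by
    rw [hθ]
    exact Real.cos_arccos (by linarith) hF1
  -- final algebra
  have hkey : 1 - Real.cos θ ≤ gC α * (t * En) ^ α := by
    rw [hcos, Real.mul_rpow ht hEn0.le]
    linarith [hFK]
  have hdiv : (1 - Real.cos θ) / gC α ≤ (t * En) ^ α := by
    rw [div_le_iff₀ hgpos]
    calc 1 - Real.cos θ ≤ gC α * (t * En) ^ α := hkey
      _ = (t * En) ^ α * gC α := by ring
  have hnum : ((1 - Real.cos θ) / gC α) ^ ((1:ℝ)/α) ≤ t * En := by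
    have h0 : 0 ≤ (1 - Real.cos θ) / gC α :=
      div_nonneg (by linarith [Real.cos_le_one θ]) hgpos.le
    have h1 : ((1 - Real.cos θ) / gC α) ^ ((1:ℝ)/α) ≤ ((t * En) ^ α) ^ ((1:ℝ)/α) :=
      Real.rpow_le_rpow h0 hdiv (by positivity)
    have h2 : ((t * En) ^ α) ^ ((1:ℝ)/α) = t * En := by
      rw [← Real.rpow_mul (mul_nonneg ht hEn0.le)]
      rw [mul_one_div, div_self hα0.ne', Real.rpow_one]
    linarith [h2 ▸ h1]
  rw [ge_iff_le, mul_one_div, div_le_iff₀ hEn0]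
  exact hnum


end
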